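/- Let m ≥ 1, 1 ≤ p ≤ ∞, and let s ∈ L^p(𝕋) be nonnegative. Then there is a constant C depending only on m and p such that for every integer M ≥ 1: ∫₀¹ |2 sin(π ξ)|^{2m} · |sin(π M ξ)/(M sin(π ξ))|^{2(m+1)} · s(ξ) dξ ≤ C ‖s‖_{L^p(𝕋)} M^{−(2m+1−1/p)}. -/

import Mathlib

open MeasureTheory Real ENNReal

noncomputable section

lemma abs_sin_nat_mul_le (n : ℕ) (x : ℝ) : |Real.sin (n * x)| ≤ n * |Real.sin x| := by
  induction n with
  | zero => simp
  | succ n ih =>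
    have h : ((n:ℝ)+1) * x = n*x + x := by ring
    push_cast
    rw [h, Real.sin_add]
    calc |Real.sin (n*x) * Real.cos x + Real.cos (n*x) * Real.sin x|
        ≤ |Real.sin (n*x) * Real.cos x| + |Real.cos (n*x) * Real.sin x| := abs_add_le _ _
      _ ≤ |Real.sin (n*x)| * 1 + 1 * |Real.sin x| := by
          rw [abs_mul, abs_mul]
          gcongr <;> exact Real.abs_cos_le_one _
      _ ≤ n * |Real.sin x| + 1 * |Real.sin x| := by
          rw [mul_one]; gcongr
      _ = ((n:ℝ)+1) * |Real.sin x| := by ring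

lemma two_min_le_abs_sin {ξ : ℝ} (h0 : 0 ≤ ξ) (h1 : ξ ≤ 1) :
    2 * min ξ (1-ξ) ≤ |Real.sin (π * ξ)| := by
  rcases le_total ξ (1/2) with hle | hge
  · rw [min_eq_left (by linarith)]
    have habs : |π * ξ| ≤ π / 2 := by
      rw [abs_of_nonneg (by positivity)]
      nlinarith [Real.pi_pos]
    have := Real.mul_abs_le_abs_sin habs
    rw [abs_of_nonneg (by positivity)] at this
    calc 2 * ξ = 2/π * (π * ξ) := by field_simp
      _ ≤ |Real.sin (π * ξ)| := this
  · rw [min_eq_right (by linarith)]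
    have hsin : Real.sin (π * ξ) = Real.sin (π * (1 - ξ)) := by
      rw [show π * (1-ξ) = π - π * ξ by ring, Real.sin_pi_sub]
    rw [hsin]
    have habs : |π * (1-ξ)| ≤ π / 2 := by
      rw [abs_of_nonneg (by nlinarith [Real.pi_pos])]
      nlinarith [Real.pi_pos]
    have := Real.mul_abs_le_abs_sin habs
    rw [abs_of_nonneg (by nlinarith [Real.pi_pos])] at this
    calc 2 * (1-ξ) = 2/π * (π * (1-ξ)) := by field_simp
      _ ≤ |Real.sin (π * (1-ξ))| := this

lemma F_le_pointwise (m M : ℕ) (hM : 1 ≤ M) {ξ : ℝ} (hξ : ξ ∈ Set.Ioc (0:ℝ) 1) :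
    |2 * Real.sin (π * ξ)| ^ (2 * m) *
      |Real.sin (π * M * ξ) / (M * Real.sin (π * ξ))| ^ (2 * (m + 1))
    ≤ (2/(M:ℝ))^(2*m) * min 1 (((2*(M:ℝ)*min ξ (1-ξ))^2)⁻¹) := by
  by_cases hs : Real.sin (π * ξ) = 0
  · have : |Real.sin (π * M * ξ) / ((M:ℝ) * Real.sin (π * ξ))| ^ (2 * (m + 1)) = 0 := by
      simp [hs]
    rw [this, mul_zero]
    have h1 : (0:ℝ) ≤ (2/(M:ℝ))^(2*m) := by positivity
    have h2 : (0:ℝ) ≤ min 1 (((2*(M:ℝ)*min ξ (1-ξ))^2)⁻¹) := by positivity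
    positivity
  · set a := |Real.sin (π * ξ)| with ha_def
    have ha : 0 < a := abs_pos.mpr hs
    have hlt : ξ < 1 := by
      rcases lt_or_eq_of_le hξ.2 with h | h
      · exact h
      · exfalso; apply hs; rw [h]; simp
    set d := min ξ (1-ξ) with hd_def
    have hd : 0 < d := lt_min hξ.1 (by linarith)
    have hda : 2 * d ≤ a := two_min_le_abs_sin (le_of_lt hξ.1) hξ.2
    set b := |Real.sin (π * M * ξ)| with hb_def
    have hb0 : 0 ≤ b := abs_nonneg _
    have hb1 : b ≤ 1 := abs_le.mpr ⟨Real.neg_one_le_sin _, Real.sin_le_one _⟩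
    have hM0 : (0:ℝ) ≤ M := Nat.cast_nonneg M
    have hM1 : (1:ℝ) ≤ (M:ℝ) := by exact_mod_cast hM
    have hMpos : (0:ℝ) < M := by linarith
    have hMne : (M:ℝ) ≠ 0 := ne_of_gt hMpos
    have hMa : 0 < (M:ℝ) * a := by positivity
    have hbMa : b ≤ (M:ℝ) * a := by
      have := abs_sin_nat_mul_le M (π * ξ)
      rwa [show (M:ℝ)*(π*ξ) = π*M*ξ by ring] at this
    have hr_eq : |Real.sin (π * M * ξ) / ((M:ℝ) * Real.sin (π * ξ))| = b / ((M:ℝ)*a) := by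
      rw [abs_div, abs_mul, Nat.abs_cast]
    set r := b / ((M:ℝ)*a) with hr_def
    have hr0 : 0 ≤ r := by positivity
    have hr1 : r ≤ 1 := (div_le_one hMa).mpr hbMa
    have hstep : |2 * Real.sin (π * ξ)| ^ (2 * m) *
        |Real.sin (π * M * ξ) / ((M:ℝ) * Real.sin (π * ξ))| ^ (2 * (m + 1))
        = (2*a*r)^(2*m) * r^2 := by
      rw [hr_eq, abs_mul, abs_two, show 2*(m+1) = 2*m + 2 by ring, pow_add,
        mul_pow, ← mul_assoc]
      ring
    rw [hstep]
    have h1 : 2*a*r ≤ 2/(M:ℝ) := by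
      have har : a * r = b / (M:ℝ) := by
        rw [hr_def]; field_simp
      rw [mul_assoc, har]
      calc 2 * (b/(M:ℝ)) = 2*b/(M:ℝ) := by ring
        _ ≤ 2*1/(M:ℝ) := by gcongr
        _ = 2/(M:ℝ) := by ring
    have h2 : r^2 ≤ min 1 (((2*(M:ℝ)*d)^2)⁻¹) := by
      apply le_min
      · nlinarith
      · have hr' : r ≤ ((2*(M:ℝ)*d))⁻¹ := by
          rw [hr_def, div_le_iff₀ hMa, inv_mul_eq_div, le_div_iff₀ (by positivity)]
          nlinarith [mul_le_mul_of_nonneg_left hda hM0,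
            mul_le_mul_of_nonneg_right hb1 (le_of_lt (show (0:ℝ) < 2*(M:ℝ)*d by positivity))]
        calc r^2 ≤ (((2*(M:ℝ)*d))⁻¹)^2 := by nlinarith
          _ = ((2*(M:ℝ)*d)^2)⁻¹ := by rw [inv_pow]
    calc (2*a*r)^(2*m) * r^2 ≤ (2/(M:ℝ))^(2*m) * min 1 (((2*(M:ℝ)*d)^2)⁻¹) := by
          apply mul_le_mul _ h2 (by positivity) (by positivity)
          exact pow_le_pow_left₀ (by positivity) h1 _
      _ = _ := rfl

noncomputable def gker (M : ℕ) (ξ : ℝ) : ℝ := min 1 (((2*(M:ℝ)*ξ)^2)⁻¹)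

lemma gker_meas (M : ℕ) : Measurable (gker M) := by
  unfold gker
  exact measurable_const.min ((((measurable_const.mul measurable_id).pow measurable_const)).inv)

lemma gker_nonneg (M : ℕ) (ξ : ℝ) : 0 ≤ gker M ξ := by
  unfold gker; positivity

lemma gker_le_one (M : ℕ) (ξ : ℝ) : gker M ξ ≤ 1 := min_le_left _ _

lemma gker_integrableOn (M : ℕ) (a b : ℝ) : IntervalIntegrable (gker M) volume a b := by
  apply IntervalIntegrable.mono_fun' (g := fun _ => (1:ℝ)) (intervalIntegrable_const)
  · exact (gker_meas M).aestronglyMeasurable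
  · filter_upwards with x
    rw [Real.norm_eq_abs, abs_of_nonneg (gker_nonneg M x)]
    exact gker_le_one M x

lemma gker_integral_le (M : ℕ) (hM : 1 ≤ M) :
    ∫ ξ in (0:ℝ)..1, gker M ξ ≤ 1/(M:ℝ) := by
  have hM1 : (1:ℝ) ≤ (M:ℝ) := by exact_mod_cast hM
  set c : ℝ := 1/(2*(M:ℝ)) with hc_def
  have hc0 : 0 < c := by positivity
  have hc1 : c ≤ 1 := by rw [hc_def, div_le_one (by positivity)]; linarith
  have hsplit : ∫ ξ in (0:ℝ)..1, gker M ξ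
      = (∫ ξ in (0:ℝ)..c, gker M ξ) + ∫ ξ in c..1, gker M ξ := by
    rw [intervalIntegral.integral_add_adjacent_intervals (gker_integrableOn M 0 c)
      (gker_integrableOn M c 1)]
  rw [hsplit]
  have h1 : ∫ ξ in (0:ℝ)..c, gker M ξ ≤ ∫ ξ in (0:ℝ)..c, (1:ℝ) := by
    apply intervalIntegral.integral_mono_on (le_of_lt hc0) (gker_integrableOn M 0 c)
      intervalIntegrable_const
    intro x _
    exact gker_le_one M x
  rw [intervalIntegral.integral_const, smul_eq_mul, mul_one, sub_zero] at h1
  have h2 : ∫ ξ in c..1, gker M ξ ≤ ∫ ξ in c..1, ((2*(M:ℝ))^2)⁻¹ * (ξ:ℝ)^(-2:ℤ) := by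
    apply intervalIntegral.integral_mono_on hc1 (gker_integrableOn M c 1)
    · apply ContinuousOn.intervalIntegrable
      apply ContinuousOn.mul continuousOn_const
      apply ContinuousOn.zpow₀ continuousOn_id
      intro x hx
      left
      rw [Set.uIcc_of_le hc1] at hx
      exact ne_of_gt (lt_of_lt_of_le hc0 hx.1)
    · intro x hx
      calc gker M x ≤ ((2*(M:ℝ)*x)^2)⁻¹ := min_le_right _ _
        _ = ((2*(M:ℝ))^2)⁻¹ * (x:ℝ)^(-2:ℤ) := by
            rw [zpow_neg, zpow_two, mul_pow, mul_inv, sq, sq]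
  have h3 : ∫ ξ in c..1, ((2*(M:ℝ))^2)⁻¹ * (ξ:ℝ)^(-2:ℤ) = ((2*(M:ℝ))^2)⁻¹ * (c⁻¹ - 1) := by
    rw [intervalIntegral.integral_const_mul]
    congr 1
    rw [integral_zpow]
    · norm_num
      ring
    · right
      constructor
      · norm_num
      · rw [Set.uIcc_of_le hc1]
        intro hmem
        exact absurd hmem.1 (not_le.mpr hc0)
  have hcinv : c⁻¹ = 2*(M:ℝ) := by rw [hc_def]; simp
  rw [h3, hcinv] at h2
  have : ((2*(M:ℝ))^2)⁻¹ * (2*(M:ℝ) - 1) ≤ 1/(2*(M:ℝ)) := by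
    rw [show ((2*(M:ℝ))^2)⁻¹ * (2*(M:ℝ) - 1) = (2*(M:ℝ) - 1)/(2*(M:ℝ))^2 by ring,
      div_le_div_iff₀ (by positivity) (by positivity)]
    nlinarith
  calc (∫ ξ in (0:ℝ)..c, gker M ξ) + ∫ ξ in c..1, gker M ξ
      ≤ c + 1/(2*(M:ℝ)) := by
        apply add_le_add h1 (le_trans h2 this)
    _ = 1/(M:ℝ) := by rw [hc_def]; ring

lemma gker2_intervalIntegrable (M : ℕ) :
    IntervalIntegrable (fun ξ => gker M (1-ξ)) volume 0 1 := by
  have := ((gker_integrableOn M 0 1).comp_sub_left 1).symm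
  simpa using this

lemma lint_bound (M : ℕ) (hM : 1 ≤ M) :
    ∫⁻ ξ in Set.Ioc (0:ℝ) 1, ENNReal.ofReal (gker M ξ + gker M (1-ξ))
      ≤ ENNReal.ofReal (2/(M:ℝ)) := by
  have hmeas : Measurable (fun ξ : ℝ => gker M ξ + gker M (1-ξ)) :=
    (gker_meas M).add ((gker_meas M).comp (measurable_const.sub measurable_id))
  have hI1 : IntervalIntegrable (gker M) volume 0 1 := gker_integrableOn M 0 1
  have hI2 := gker2_intervalIntegrable M
  have hint : IntegrableOn (fun ξ : ℝ => gker M ξ + gker M (1-ξ)) (Set.Ioc 0 1) volume := by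
    rw [← intervalIntegrable_iff_integrableOn_Ioc_of_le (by norm_num : (0:ℝ) ≤ 1)]
    exact hI1.add hI2
  rw [← ofReal_integral_eq_lintegral_ofReal hint
    (Filter.Eventually.of_forall fun x => add_nonneg (gker_nonneg M x) (gker_nonneg M _))]
  apply ENNReal.ofReal_le_ofReal
  rw [← intervalIntegral.integral_of_le (by norm_num : (0:ℝ) ≤ 1),
    intervalIntegral.integral_add hI1 hI2]
  have e2 : (∫ ξ in (0:ℝ)..1, gker M (1-ξ)) = ∫ ξ in (0:ℝ)..1, gker M ξ := by
    simpa using intervalIntegral.integral_comp_sub_left (a := (0:ℝ)) (b := 1) (gker M) 1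
  rw [e2]
  have := gker_integral_le M hM
  have h2 : 2/(M:ℝ) = 1/(M:ℝ) + 1/(M:ℝ) := by ring
  linarith

lemma hker_le (M : ℕ) (ξ : ℝ) :
    min 1 (((2*(M:ℝ)*min ξ (1-ξ))^2)⁻¹) ≤ gker M ξ + gker M (1-ξ) := by
  rcases le_total ξ (1-ξ) with h | h
  · rw [min_eq_left h]
    exact le_add_of_nonneg_right (gker_nonneg M _)
  · rw [min_eq_right h]
    exact le_add_of_nonneg_left (gker_nonneg M _)

lemma F_meas (m M : ℕ) : Measurable (fun ξ : ℝ =>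
    |2 * Real.sin (π * ξ)| ^ (2 * m) *
      |Real.sin (π * M * ξ) / (M * Real.sin (π * ξ))| ^ (2 * (m + 1))) := by
  apply Measurable.mul
  · exact (((measurable_const.mul (Real.measurable_sin.comp
      (measurable_const.mul measurable_id))).abs).pow measurable_const)
  · apply Measurable.pow _ measurable_const
    apply Measurable.abs
    apply Measurable.div
    · exact Real.measurable_sin.comp ((measurable_const.mul measurable_id))
    · exact measurable_const.mul (Real.measurable_sin.comp (measurable_const.mul measurable_id))

lemma F_nonneg (m M : ℕ) (ξ : ℝ) : 0 ≤
    |2 * Real.sin (π * ξ)| ^ (2 * m) *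
      |Real.sin (π * M * ξ) / (M * Real.sin (π * ξ))| ^ (2 * (m + 1)) := by
  positivity

lemma key_eLpNorm (m M : ℕ) (hM : 1 ≤ M) (q : ℝ≥0∞) (hq : 1 ≤ q) :
    eLpNorm (fun ξ : ℝ =>
      |2 * Real.sin (π * ξ)| ^ (2 * m) *
        |Real.sin (π * M * ξ) / (M * Real.sin (π * ξ))| ^ (2 * (m + 1)))
      q (volume.restrict (Set.Ioc (0:ℝ) 1))
    ≤ ENNReal.ofReal (2^(2*m+1) * (M:ℝ) ^ (-(2*(m:ℝ) + (1/q).toReal))) := by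
  set μ := volume.restrict (Set.Ioc (0:ℝ) 1) with hμ
  set F : ℝ → ℝ := fun ξ : ℝ =>
      |2 * Real.sin (π * ξ)| ^ (2 * m) *
        |Real.sin (π * M * ξ) / (M * Real.sin (π * ξ))| ^ (2 * (m + 1)) with hF
  have hM1 : (1:ℝ) ≤ (M:ℝ) := by exact_mod_cast hM
  have hMpos : (0:ℝ) < M := by linarith
  set A : ℝ := (2/(M:ℝ))^(2*m) with hA
  have hA0 : 0 ≤ A := by positivity
  have hMnat : ((2*m : ℕ) : ℝ) = 2*(m:ℝ) := by push_cast; ring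
  have hMpow : (M:ℝ) ^ (-(2*(m:ℝ))) = ((M:ℝ)^(2*m))⁻¹ := by
    rw [← hMnat, Real.rpow_neg (le_of_lt hMpos), Real.rpow_natCast]
  by_cases hqt : q = ⊤
  · subst hqt
    have hθ : ((1:ℝ≥0∞)/⊤).toReal = 0 := by simp
    rw [hθ]
    have hbd : ∀ᵐ ξ ∂μ, ‖F ξ‖ ≤ A := by
      rw [hμ, ae_restrict_iff' measurableSet_Ioc]
      filter_upwards with ξ hξ
      rw [Real.norm_eq_abs, abs_of_nonneg (F_nonneg m M ξ)]
      calc F ξ ≤ A * min 1 (((2*(M:ℝ)*min ξ (1-ξ))^2)⁻¹) := F_le_pointwise m M hM hξ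
        _ ≤ A * 1 := by
            apply mul_le_mul_of_nonneg_left (min_le_left _ _) hA0
        _ = A := mul_one A
    calc eLpNorm F ⊤ μ ≤ μ Set.univ ^ ((⊤:ℝ≥0∞).toReal)⁻¹ * ENNReal.ofReal A :=
          eLpNorm_le_of_ae_bound hbd
      _ = ENNReal.ofReal A := by simp
      _ ≤ _ := by
          apply ENNReal.ofReal_le_ofReal
          rw [add_zero, hMpow, hA, div_pow, div_eq_mul_inv]
          apply mul_le_mul_of_nonneg_right _ (by positivity)
          exact pow_le_pow_right₀ (by norm_num : (1:ℝ) ≤ 2) (Nat.le_succ _)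
  · have hq0 : q ≠ 0 := by
      intro h; rw [h] at hq; simp at hq
    set t : ℝ := q.toReal with ht_def
    have ht1 : 1 ≤ t := by
      rw [ht_def, ← ENNReal.toReal_one]
      exact ENNReal.toReal_mono hqt hq
    have ht0 : 0 < t := lt_of_lt_of_le zero_lt_one ht1
    have hθ : ((1:ℝ≥0∞)/q).toReal = 1/t := by
      rw [one_div, ENNReal.toReal_inv, ht_def, one_div]
    rw [hθ, eLpNorm_eq_lintegral_rpow_enorm_toReal hq0 hqt, ← ht_def]
    have hlint : ∫⁻ ξ, (‖F ξ‖₊ : ℝ≥0∞) ^ t ∂μ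
        ≤ (ENNReal.ofReal A) ^ t * ENNReal.ofReal (2/(M:ℝ)) := by
      have hpt : ∀ᵐ ξ ∂μ, (‖F ξ‖₊ : ℝ≥0∞) ^ t
          ≤ (ENNReal.ofReal A) ^ t * ENNReal.ofReal (gker M ξ + gker M (1-ξ)) := by
        rw [hμ, ae_restrict_iff' measurableSet_Ioc]
        filter_upwards with ξ hξ
        have hF1 : (‖F ξ‖₊ : ℝ≥0∞) = ENNReal.ofReal (F ξ) :=
          (Real.enorm_eq_ofReal (F_nonneg m M ξ))
        rw [hF1]
        set hm : ℝ := min 1 (((2*(M:ℝ)*min ξ (1-ξ))^2)⁻¹) with hhm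
        calc (ENNReal.ofReal (F ξ)) ^ t ≤ (ENNReal.ofReal (A * hm)) ^ t := by
              apply ENNReal.rpow_le_rpow _ (le_of_lt ht0)
              exact ENNReal.ofReal_le_ofReal (F_le_pointwise m M hM hξ)
          _ = (ENNReal.ofReal A) ^ t * (ENNReal.ofReal hm) ^ t := by
              rw [ENNReal.ofReal_mul hA0, ENNReal.mul_rpow_of_nonneg _ _ (le_of_lt ht0)]
          _ ≤ (ENNReal.ofReal A) ^ t * (ENNReal.ofReal hm) ^ (1:ℝ) := by
              apply mul_le_mul_right
              apply ENNReal.rpow_le_rpow_of_exponent_ge _ ht1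
              exact ENNReal.ofReal_le_one.mpr (min_le_left _ _)
          _ ≤ (ENNReal.ofReal A) ^ t * ENNReal.ofReal (gker M ξ + gker M (1-ξ)) := by
              rw [ENNReal.rpow_one]
              exact mul_le_mul_right (ENNReal.ofReal_le_ofReal (hker_le M ξ)) _
      calc ∫⁻ ξ, (‖F ξ‖₊ : ℝ≥0∞) ^ t ∂μ
          ≤ ∫⁻ ξ, (ENNReal.ofReal A) ^ t * ENNReal.ofReal (gker M ξ + gker M (1-ξ)) ∂μ :=
            lintegral_mono_ae hpt
        _ = (ENNReal.ofReal A) ^ t * ∫⁻ ξ, ENNReal.ofReal (gker M ξ + gker M (1-ξ)) ∂μ := by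
            apply lintegral_const_mul
            exact ((gker_meas M).add ((gker_meas M).comp
              (measurable_const.sub measurable_id))).ennreal_ofReal
        _ ≤ (ENNReal.ofReal A) ^ t * ENNReal.ofReal (2/(M:ℝ)) :=
            mul_le_mul_right (lint_bound M hM) _
    calc (∫⁻ ξ, (‖F ξ‖₊ : ℝ≥0∞) ^ t ∂μ) ^ (1/t)
        ≤ ((ENNReal.ofReal A) ^ t * ENNReal.ofReal (2/(M:ℝ))) ^ (1/t) := by
          exact ENNReal.rpow_le_rpow hlint (by positivity)
      _ = ENNReal.ofReal A * (ENNReal.ofReal (2/(M:ℝ))) ^ (1/t) := by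
          rw [ENNReal.mul_rpow_of_nonneg _ _ (by positivity : (0:ℝ) ≤ 1/t),
            ← ENNReal.rpow_mul, mul_one_div, div_self (ne_of_gt ht0), ENNReal.rpow_one]
      _ ≤ ENNReal.ofReal (2^(2*m+1) * (M:ℝ) ^ (-(2*(m:ℝ) + 1/t))) := by
          rw [ENNReal.ofReal_rpow_of_pos (by positivity : (0:ℝ) < 2/(M:ℝ)),
            ← ENNReal.ofReal_mul hA0]
          apply ENNReal.ofReal_le_ofReal
          have h2t : (2/(M:ℝ)) ^ (1/t) = 2 ^ (1/t) / (M:ℝ) ^ (1/t) := by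
            rw [Real.div_rpow (by norm_num) (le_of_lt hMpos)]
          have h2le : (2:ℝ) ^ (1/t) ≤ 2 := by
            nth_rewrite 2 [← Real.rpow_one 2]
            apply Real.rpow_le_rpow_of_exponent_le one_le_two
            rw [div_le_one ht0]; exact ht1
          have hsplit : (M:ℝ) ^ (-(2*(m:ℝ) + 1/t))
              = ((M:ℝ)^(2*m))⁻¹ * ((M:ℝ) ^ (1/t))⁻¹ := by
            rw [show -(2*(m:ℝ) + 1/t) = (-(2*(m:ℝ))) + (-(1/t)) by ring,
              Real.rpow_add hMpos, hMpow, Real.rpow_neg (le_of_lt hMpos)]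
          rw [hsplit, hA, div_pow, h2t]
          have hMt0 : (0:ℝ) < (M:ℝ) ^ (1/t) := Real.rpow_pos_of_pos hMpos _
          rw [div_mul_div_comm, div_eq_mul_inv, mul_inv, pow_succ]
          gcongr

/-- for `m ≥ 1`, `1 ≤ p ≤ ∞` and any nonnegative spectral density
`s ∈ L^p(𝕋)`, the absolutely continuous mean square error after `sinc^{m+1}` filtering
of length `M` satisfies
`∫₀¹ |2 sin(πξ)|^{2m} |Sinc^{m+1}_M(ξ)|² s(ξ) dξ ≤ C ‖s‖_{L^p} M^{−(2m+1−1/p)}`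
with `C = C(m, p)`. -/
theorem ac_mse_Lp_bound (m : ℕ) (hm : 1 ≤ m) (p : ℝ≥0∞) (hp : 1 ≤ p) :
    ∃ C : ℝ, 0 < C ∧
      ∀ s : ℝ → ℝ, (∀ ξ, 0 ≤ s ξ) →
        MemLp s p (volume.restrict (Set.Ioc (0:ℝ) 1)) →
        ∀ M : ℕ, 1 ≤ M →
          (∫ ξ in (0:ℝ)..1,
              |2 * Real.sin (π * ξ)| ^ (2 * m) *
                |Real.sin (π * M * ξ) / (M * Real.sin (π * ξ))| ^ (2 * (m + 1)) * s ξ)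
            ≤ C * (eLpNorm s p (volume.restrict (Set.Ioc (0:ℝ) 1))).toReal *
                (M : ℝ) ^ (-(2 * (m : ℝ) + 1 - (1 / p).toReal)) := by
  refine ⟨2^(2*m+1), by positivity, ?_⟩
  intro s hs hsp M hM
  set μ := volume.restrict (Set.Ioc (0:ℝ) 1) with hμ
  set F : ℝ → ℝ := fun ξ : ℝ =>
      |2 * Real.sin (π * ξ)| ^ (2 * m) *
        |Real.sin (π * M * ξ) / (M * Real.sin (π * ξ))| ^ (2 * (m + 1)) with hF
  set q : ℝ≥0∞ := ((1:ℝ≥0∞) - 1/p)⁻¹ with hq_def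
  have hinvp : 1/p ≤ 1 := by
    rw [one_div]; exact ENNReal.inv_le_one.mpr hp
  have hq1 : 1 ≤ q := by
    rw [hq_def]
    have := ENNReal.inv_le_inv.mpr (tsub_le_self : (1:ℝ≥0∞) - 1/p ≤ 1)
    simpa using this
  have hq_inv : 1/q = 1 - 1/p := by
    rw [hq_def, one_div, inv_inv]
  have hpqr : 1/(1:ℝ≥0∞) = 1/q + 1/p := by
    rw [hq_inv, tsub_add_cancel_of_le hinvp, one_div, inv_one]
  have hθ : (1/q).toReal = 1 - (1/p).toReal := by
    rw [hq_inv, ENNReal.toReal_sub_of_le hinvp ENNReal.one_ne_top, ENNReal.toReal_one]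
  have hFae : AEStronglyMeasurable F μ := (F_meas m M).aestronglyMeasurable
  have hsae : AEStronglyMeasurable s μ := hsp.1
  have h_eq : (∫ ξ in (0:ℝ)..1, F ξ * s ξ)
      = (∫⁻ ξ, ENNReal.ofReal (F ξ * s ξ) ∂μ).toReal := by
    rw [intervalIntegral.integral_of_le (by norm_num : (0:ℝ) ≤ 1)]
    exact integral_eq_lintegral_of_nonneg_ae
      (Filter.Eventually.of_forall fun ξ => mul_nonneg (F_nonneg m M ξ) (hs ξ))
      (hFae.mul hsae)
  have h_l1 : eLpNorm (F • s) 1 μ = ∫⁻ ξ, ENNReal.ofReal (F ξ * s ξ) ∂μ := by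
    rw [eLpNorm_one_eq_lintegral_enorm]
    apply lintegral_congr
    intro ξ
    show ‖F ξ • s ξ‖ₑ = _
    rw [smul_eq_mul, Real.enorm_eq_ofReal (mul_nonneg (F_nonneg m M ξ) (hs ξ))]
  have hHolder : eLpNorm (F • s) 1 μ ≤ eLpNorm F q μ * eLpNorm s p μ :=
    haveI : ENNReal.HolderTriple q p 1 := ⟨by simpa [one_div] using hpqr.symm⟩
    eLpNorm_smul_le_mul_eLpNorm hsae hFae
  have hkey := key_eLpNorm m M hM q hq1
  have hc0 : (0:ℝ) ≤ 2^(2*m+1) * (M:ℝ) ^ (-(2*(m:ℝ) + (1/q).toReal)) := by positivity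
  have hFfin : eLpNorm F q μ ≠ ⊤ := ne_top_of_le_ne_top ENNReal.ofReal_ne_top hkey
  have hsfin : eLpNorm s p μ ≠ ⊤ := hsp.2.ne
  calc (∫ ξ in (0:ℝ)..1, F ξ * s ξ)
      = (eLpNorm (F • s) 1 μ).toReal := by rw [h_eq, h_l1]
    _ ≤ (eLpNorm F q μ * eLpNorm s p μ).toReal :=
        ENNReal.toReal_mono (ENNReal.mul_ne_top hFfin hsfin) hHolder
    _ = (eLpNorm F q μ).toReal * (eLpNorm s p μ).toReal := ENNReal.toReal_mul
    _ ≤ (2^(2*m+1) * (M:ℝ) ^ (-(2*(m:ℝ) + (1/q).toReal))) * (eLpNorm s p μ).toReal := by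
        apply mul_le_mul_of_nonneg_right _ ENNReal.toReal_nonneg
        exact ENNReal.toReal_le_of_le_ofReal hc0 hkey
    _ = 2^(2*m+1) * (eLpNorm s p μ).toReal * (M:ℝ) ^ (-(2*(m:ℝ) + 1 - (1/p).toReal)) := by
        rw [hθ, show -(2*(m:ℝ) + (1 - (1/p).toReal)) = -(2*(m:ℝ) + 1 - (1/p).toReal) by ring]
        ring
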